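/- Let r ∈ ℝ, γ ∈ ℝ, and let K, f₀ : ℝ → ℝ be measurable with ∫_ℝ |K(x)| e^{rx} dx < ∞ and ∫_ℝ |f₀(x)| e^{rx} dx < ∞. Then for every t ≥ 0 the series f(t) = e^{γt} Σ_{n≥0} (tⁿ/n!) K^{*n} ∗ f₀ converges absolutely in L¹(ℝ, e^{rx} dx) and ∫_ℝ f(t,x) e^{rx} dx = e^{(γ + M_r) t} ∫_ℝ f₀(x) e^{rx} dx, where M_r = ∫_ℝ K(x) e^{rx} dx. In particular, if γ + M_r = 0 then the moment ∫ f(t,x) e^{rx} dx is constant in time (for r = 1/2 this is the conservation of wave action along solutions of the linearized wave kinetic equation), and if γ + M_r > 0 it grows exponentially at rate γ + M_r. -/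

import Mathlib

open Convolution



open MeasureTheory

/-- `iterConv K n` is the `(n+1)`-fold convolution `K^{*(n+1)}` of `K` with itself,
so `iterConv K 0 = K^{*1} = K`. -/
noncomputable def iterConv (K : ℝ → ℝ) : ℕ → ℝ → ℝ
  | 0 => K
  | n + 1 => fun x => ∫ y, iterConv K n (x - y) * K y

/-- The solution `f(t) = e^{γt} Σ_{n≥0} (tⁿ/n!) K^{*n} ∗ f₀` of the linearized
wave kinetic equation `∂_t f = γ f + K ∗ f`, defined pointwise (the `n = 0` term
being `f₀` itself). -/
noncomputable def solFun (K : ℝ → ℝ) (γ : ℝ) (f₀ : ℝ → ℝ) (t x : ℝ) : ℝ :=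
  Real.exp (γ * t) * (f₀ x +
    ∑' n : ℕ, (t ^ (n + 1) / (Nat.factorial (n + 1) : ℝ)) *
      ∫ y, iterConv K n (x - y) * f₀ y)

-- convolution step helpers
lemma convStep_eq (F G : ℝ → ℝ) :
    (fun x => ∫ y, F (x - y) * G y) = convolution G F (ContinuousLinearMap.mul ℝ ℝ) volume := by
  funext x
  simp only [convolution, ContinuousLinearMap.mul_apply']
  exact integral_congr_ae (Filter.Eventually.of_forall fun y => mul_comm _ _)

lemma convStep_measurable {F G : ℝ → ℝ} (hF : Measurable F) (hG : Measurable G) :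
    Measurable (fun x => ∫ y, F (x - y) * G y) := by
  have : StronglyMeasurable (fun p : ℝ × ℝ => F (p.1 - p.2) * G p.2) :=
    ((hF.comp measurable_sub).mul (hG.comp measurable_snd)).stronglyMeasurable
  exact this.integral_prod_right'.measurable

lemma convStep_integrable {F G : ℝ → ℝ} (hF : Integrable F) (hG : Integrable G) :
    Integrable (fun x => ∫ y, F (x - y) * G y) := by
  rw [convStep_eq]
  exact hG.integrable_convolution (ContinuousLinearMap.mul ℝ ℝ) hF

lemma convStep_integral {F G : ℝ → ℝ} (hF : Integrable F) (hG : Integrable G) :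
    ∫ x, (∫ y, F (x - y) * G y) = (∫ x, F x) * (∫ x, G x) := by
  rw [convStep_eq]
  rw [integral_convolution (ContinuousLinearMap.mul ℝ ℝ) hG hF]
  exact mul_comm _ _

lemma convStep_abs_le {F G : ℝ → ℝ} (hFm : Measurable F) (hGm : Measurable G)
    (hF : Integrable F) (hG : Integrable G) :
    ∫ x, |∫ y, F (x - y) * G y| ≤ (∫ x, |F x|) * (∫ x, |G x|) := by
  have hFa : Integrable (fun x => |F x|) := hF.abs
  have hGa : Integrable (fun x => |G x|) := hG.abs
  have h1 : Integrable (fun x => |∫ y, F (x - y) * G y|) := (convStep_integrable hF hG).abs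
  have h2 : Integrable (fun x => ∫ y, |F (x - y)| * |G y|) := convStep_integrable hFa hGa
  have h3 : ∀ x, |∫ y, F (x - y) * G y| ≤ ∫ y, |F (x - y)| * |G y| := by
    intro x
    calc |∫ y, F (x - y) * G y| ≤ ∫ y, ‖F (x - y) * G y‖ := by
          simpa using norm_integral_le_integral_norm (fun y => F (x - y) * G y)
    _ = ∫ y, |F (x - y)| * |G y| := by
        refine integral_congr_ae (Filter.Eventually.of_forall fun y => ?_)
        simp [abs_mul]
  calc ∫ x, |∫ y, F (x - y) * G y| ≤ ∫ x, ∫ y, |F (x - y)| * |G y| :=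
        integral_mono h1 h2 h3
  _ = (∫ x, |F x|) * (∫ x, |G x|) := convStep_integral hFa hGa
lemma iterConv_weight (K : ℝ → ℝ) (r : ℝ) :
    ∀ n x, iterConv (fun z => K z * Real.exp (r * z)) n x
      = iterConv K n x * Real.exp (r * x) := by
  intro n
  induction n with
  | zero => intro x; rfl
  | succ n ih =>
    intro x
    show (∫ y, iterConv (fun z => K z * Real.exp (r * z)) n (x - y)
        * (K y * Real.exp (r * y)))
      = (∫ y, iterConv K n (x - y) * K y) * Real.exp (r * x)
    rw [← integral_mul_const]
    refine integral_congr_ae (Filter.Eventually.of_forall fun y => ?_)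
    simp only [ih]
    have : Real.exp (r * (x - y)) * Real.exp (r * y) = Real.exp (r * x) := by
      rw [← Real.exp_add]; ring_nf
    calc iterConv K n (x - y) * Real.exp (r * (x - y)) * (K y * Real.exp (r * y))
        = iterConv K n (x - y) * K y * (Real.exp (r * (x - y)) * Real.exp (r * y)) := by ring
      _ = iterConv K n (x - y) * K y * Real.exp (r * x) := by rw [this]

lemma conv_weight (K f₀ : ℝ → ℝ) (r : ℝ) (n : ℕ) (x : ℝ) :
    (∫ y, iterConv (fun z => K z * Real.exp (r * z)) n (x - y)
        * (f₀ y * Real.exp (r * y)))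
      = (∫ y, iterConv K n (x - y) * f₀ y) * Real.exp (r * x) := by
  rw [← integral_mul_const]
  refine integral_congr_ae (Filter.Eventually.of_forall fun y => ?_)
  simp only [iterConv_weight]
  have : Real.exp (r * (x - y)) * Real.exp (r * y) = Real.exp (r * x) := by
    rw [← Real.exp_add]; ring_nf
  calc iterConv K n (x - y) * Real.exp (r * (x - y)) * (f₀ y * Real.exp (r * y))
      = iterConv K n (x - y) * f₀ y * (Real.exp (r * (x - y)) * Real.exp (r * y)) := by ring
    _ = iterConv K n (x - y) * f₀ y * Real.exp (r * x) := by rw [this]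

lemma iterConv_measurable {K : ℝ → ℝ} (hK : Measurable K) (n : ℕ) :
    Measurable (iterConv K n) := by
  induction n with
  | zero => exact hK
  | succ n ih => exact convStep_measurable ih hK

lemma iterConv_props {K : ℝ → ℝ} (hKm : Measurable K) (hK : Integrable K) (n : ℕ) :
    Integrable (iterConv K n) ∧ (∫ x, iterConv K n x) = (∫ x, K x) ^ (n + 1) ∧
      (∫ x, |iterConv K n x|) ≤ (∫ x, |K x|) ^ (n + 1) := by
  induction n with
  | zero =>
    exact ⟨hK, by simp [iterConv], by simp [iterConv]⟩
  | succ n ih =>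
    obtain ⟨hint, hval, habs⟩ := ih
    refine ⟨convStep_integrable hint hK, ?_, ?_⟩
    · show (∫ x, ∫ y, iterConv K n (x - y) * K y) = _
      rw [convStep_integral hint hK, hval]; ring
    · show (∫ x, |∫ y, iterConv K n (x - y) * K y|) ≤ _
      calc (∫ x, |∫ y, iterConv K n (x - y) * K y|)
          ≤ (∫ x, |iterConv K n x|) * (∫ x, |K x|) :=
            convStep_abs_le (iterConv_measurable hKm n) hKm hint hK
        _ ≤ (∫ x, |K x|) ^ (n + 1) * (∫ x, |K x|) := by
            apply mul_le_mul_of_nonneg_right habs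
            exact integral_nonneg fun x => abs_nonneg _
        _ = (∫ x, |K x|) ^ (n + 1 + 1) := by ring

set_option maxHeartbeats 1000000 in
theorem stmt18 (r γ : ℝ) (K f₀ : ℝ → ℝ) (hKm : Measurable K) (hf₀m : Measurable f₀)
    (hK : Integrable (fun x => |K x| * Real.exp (r * x)))
    (hf₀ : Integrable (fun x => |f₀ x| * Real.exp (r * x))) :
    -- the series converges absolutely in `L¹(ℝ, e^{rx} dx)`
    (∀ t : ℝ, 0 ≤ t → Summable (fun n : ℕ =>
      (t ^ (n + 1) / (Nat.factorial (n + 1) : ℝ)) *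
        ∫ x, |∫ y, iterConv K n (x - y) * f₀ y| * Real.exp (r * x))) ∧
    -- the exact evolution of the moment `∫ f(t,x) e^{rx} dx`
    (∀ t : ℝ, 0 ≤ t →
      (∫ x, solFun K γ f₀ t x * Real.exp (r * x)) =
        Real.exp ((γ + ∫ x, K x * Real.exp (r * x)) * t) *
          ∫ x, f₀ x * Real.exp (r * x)) ∧
    -- in particular, if `γ + M_r = 0` the moment is conserved
    (γ + (∫ x, K x * Real.exp (r * x)) = 0 → ∀ t : ℝ, 0 ≤ t →
      (∫ x, solFun K γ f₀ t x * Real.exp (r * x)) = ∫ x, f₀ x * Real.exp (r * x)) := by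
  set g : ℝ → ℝ := fun z => K z * Real.exp (r * z) with hg_def
  set h : ℝ → ℝ := fun z => f₀ z * Real.exp (r * z) with hh_def
  have hgm : Measurable g := hKm.mul (Real.measurable_exp.comp (measurable_const.mul measurable_id))
  have hhm : Measurable h := hf₀m.mul (Real.measurable_exp.comp (measurable_const.mul measurable_id))
  have hgInt : Integrable g := by
    refine hK.mono' hgm.aestronglyMeasurable (Filter.Eventually.of_forall fun x => ?_)
    simp [hg_def, Real.norm_eq_abs, abs_mul, abs_of_pos (Real.exp_pos _)]
  have hhInt : Integrable h := by
    refine hf₀.mono' hhm.aestronglyMeasurable (Filter.Eventually.of_forall fun x => ?_)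
    simp [hh_def, Real.norm_eq_abs, abs_mul, abs_of_pos (Real.exp_pos _)]
  -- the weighted convolutions
  set c : ℕ → ℝ → ℝ := fun n x => ∫ y, iterConv g n (x - y) * h y with hc_def
  have hcm : ∀ n, Measurable (c n) := fun n =>
    convStep_measurable (iterConv_measurable hgm n) hhm
  have hcInt : ∀ n, Integrable (c n) := fun n =>
    convStep_integrable (iterConv_props hgm hgInt n).1 hhInt
  set M : ℝ := ∫ x, g x with hM_def
  set H : ℝ := ∫ x, h x with hH_def
  set Ag : ℝ := ∫ x, |g x| with hAg_def
  set Ah : ℝ := ∫ x, |h x| with hAh_def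
  have hAg0 : 0 ≤ Ag := integral_nonneg fun x => abs_nonneg _
  have hAh0 : 0 ≤ Ah := integral_nonneg fun x => abs_nonneg _
  have hcval : ∀ n, (∫ x, c n x) = M ^ (n + 1) * H := by
    intro n
    rw [hc_def]
    rw [convStep_integral (iterConv_props hgm hgInt n).1 hhInt,
      (iterConv_props hgm hgInt n).2.1]
  have hcabs : ∀ n, (∫ x, |c n x|) ≤ Ag ^ (n + 1) * Ah := by
    intro n
    calc (∫ x, |c n x|)
        ≤ (∫ x, |iterConv g n x|) * Ah :=
          convStep_abs_le (iterConv_measurable hgm n) hhm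
            (iterConv_props hgm hgInt n).1 hhInt
      _ ≤ Ag ^ (n + 1) * Ah :=
          mul_le_mul_of_nonneg_right (iterConv_props hgm hgInt n).2.2 hAh0
  have hcabs0 : ∀ n, 0 ≤ ∫ x, |c n x| := fun n => integral_nonneg fun x => abs_nonneg _
  -- relation to the unweighted convolutions
  have hkey : ∀ n x, c n x = (∫ y, iterConv K n (x - y) * f₀ y) * Real.exp (r * x) :=
    fun n x => conv_weight K f₀ r n x
  have hkey_abs : ∀ n x, |∫ y, iterConv K n (x - y) * f₀ y| * Real.exp (r * x) = |c n x| := by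
    intro n x
    rw [hkey n x, abs_mul, abs_of_pos (Real.exp_pos _)]
  -- Part 1: summability
  have part1 : ∀ t : ℝ, 0 ≤ t → Summable (fun n : ℕ =>
      (t ^ (n + 1) / (Nat.factorial (n + 1) : ℝ)) *
        ∫ x, |∫ y, iterConv K n (x - y) * f₀ y| * Real.exp (r * x)) := by
    intro t ht
    have hrw : ∀ n : ℕ, (∫ x, |∫ y, iterConv K n (x - y) * f₀ y| * Real.exp (r * x))
        = ∫ x, |c n x| := by
      intro n
      exact integral_congr_ae (Filter.Eventually.of_forall fun x => hkey_abs n x)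
    have hu : Summable (fun n : ℕ => (t * Ag) ^ (n + 1) / (Nat.factorial (n + 1) : ℝ) * Ah) :=
      ((Real.summable_pow_div_factorial (t * Ag)).comp_injective
        Nat.succ_injective).mul_right Ah
    refine Summable.of_nonneg_of_le (fun n => ?_) (fun n => ?_) hu
    · refine mul_nonneg (div_nonneg (pow_nonneg ht _) (by positivity)) ?_
      rw [hrw]; exact hcabs0 n
    · rw [hrw]
      calc t ^ (n + 1) / (Nat.factorial (n + 1) : ℝ) * ∫ x, |c n x|
          ≤ t ^ (n + 1) / (Nat.factorial (n + 1) : ℝ) * (Ag ^ (n + 1) * Ah) := by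
            apply mul_le_mul_of_nonneg_left (hcabs n)
            exact div_nonneg (pow_nonneg ht _) (by positivity)
        _ = (t * Ag) ^ (n + 1) / (Nat.factorial (n + 1) : ℝ) * Ah := by
            rw [mul_pow]; ring
  -- Part 2: the moment identity
  have part2 : ∀ t : ℝ, 0 ≤ t →
      (∫ x, solFun K γ f₀ t x * Real.exp (r * x)) =
        Real.exp ((γ + M) * t) * H := by
    intro t ht
    set a : ℕ → ℝ := fun n => t ^ (n + 1) / (Nat.factorial (n + 1) : ℝ) with ha_def
    have ha0 : ∀ n, 0 ≤ a n := fun n => div_nonneg (pow_nonneg ht _) (by positivity)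
    set fn : ℕ → ℝ → ℝ := fun n x => a n * c n x with hfn_def
    have hfnInt : ∀ n, Integrable (fn n) := fun n => (hcInt n).const_mul _
    set F : ℕ → ℝ → ℝ := fun n => Nat.casesOn n h fn with hF_def
    have hFInt : ∀ n, Integrable (F n) := by
      intro n; cases n with
      | zero => exact hhInt
      | succ n => exact hfnInt n
    have hFm : ∀ n, AEStronglyMeasurable (F n) volume := fun n => (hFInt n).aestronglyMeasurable
    -- the lintegral bound
    have hsum_norm : Summable (fun n => ∫ x, ‖fn n x‖) := by
      have hu : Summable (fun n : ℕ => (t * Ag) ^ (n + 1) / (Nat.factorial (n + 1) : ℝ) * Ah) :=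
        ((Real.summable_pow_div_factorial (t * Ag)).comp_injective
          Nat.succ_injective).mul_right Ah
      refine Summable.of_nonneg_of_le (fun n => integral_nonneg fun x => norm_nonneg _)
        (fun n => ?_) hu
      have : (∫ x, ‖fn n x‖) = a n * ∫ x, |c n x| := by
        rw [← integral_const_mul]
        refine integral_congr_ae (Filter.Eventually.of_forall fun x => ?_)
        simp [hfn_def, Real.norm_eq_abs, abs_mul, abs_of_nonneg (ha0 n)]
      rw [this]
      calc a n * ∫ x, |c n x| ≤ a n * (Ag ^ (n + 1) * Ah) :=
            mul_le_mul_of_nonneg_left (hcabs n) (ha0 n)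
        _ = (t * Ag) ^ (n + 1) / (Nat.factorial (n + 1) : ℝ) * Ah := by
            rw [mul_pow, ha_def]; ring
    have hlint_ne_top : (∑' n, ∫⁻ x, ‖fn n x‖₊) ≠ ⊤ := by
      have : ∀ n, (∫⁻ x, ‖fn n x‖₊) = ENNReal.ofReal (∫ x, ‖fn n x‖) := by
        intro n
        exact (ofReal_integral_norm_eq_lintegral_enorm (hfnInt n)).symm
      simp_rw [this]
      rw [← ENNReal.ofReal_tsum_of_nonneg (fun n => integral_nonneg fun x => norm_nonneg _)
        hsum_norm]
      exact ENNReal.ofReal_ne_top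
    have hFnorm_sum : Summable (fun n => ∫ x, ‖F n x‖) := by
      rw [← summable_nat_add_iff 1]
      exact hsum_norm
    have hFlint_ne_top : (∑' n, ∫⁻ x, ‖F n x‖₊) ≠ ⊤ := by
      have : ∀ n, (∫⁻ x, ‖F n x‖₊) = ENNReal.ofReal (∫ x, ‖F n x‖) := by
        intro n
        exact (ofReal_integral_norm_eq_lintegral_enorm (hFInt n)).symm
      simp_rw [this]
      rw [← ENNReal.ofReal_tsum_of_nonneg (fun n => integral_nonneg fun x => norm_nonneg _)
        hFnorm_sum]
      exact ENNReal.ofReal_ne_top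
    -- a.e. summability of fn
    have hae : ∀ᵐ x : ℝ, Summable fun n => fn n x := by
      have hmeas : ∀ n, AEMeasurable (fun x => (‖fn n x‖₊ : ENNReal)) volume := fun n =>
        (hfnInt n).aestronglyMeasurable.enorm
      have h1 : (∫⁻ x, ∑' n, (‖fn n x‖₊ : ENNReal)) ≠ ⊤ := by
        rw [lintegral_tsum hmeas]; exact hlint_ne_top
      filter_upwards [ae_lt_top' (AEMeasurable.ennreal_tsum hmeas) h1] with x hx
      have := ENNReal.tsum_coe_ne_top_iff_summable.1 hx.ne
      exact Summable.of_nnnorm this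
    -- pointwise (a.e.) rewriting of the integrand
    have hptwise : ∀ᵐ x : ℝ, solFun K γ f₀ t x * Real.exp (r * x)
        = Real.exp (γ * t) * ∑' n, F n x := by
      filter_upwards [hae] with x hx
      have hFsum : Summable fun n => F n x := by
        have : Summable fun n => F (n + 1) x := hx
        exact (summable_nat_add_iff 1).1 this
      have hshift : (∑' n, F n x) = h x + ∑' n, fn n x := by
        rw [Summable.tsum_eq_zero_add hFsum]
        rfl
      rw [hshift]
      show Real.exp (γ * t) * (f₀ x + ∑' n, a n * ∫ y, iterConv K n (x - y) * f₀ y)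
          * Real.exp (r * x) = _
      have : (∑' n, a n * ∫ y, iterConv K n (x - y) * f₀ y) * Real.exp (r * x)
          = ∑' n, fn n x := by
        rw [← tsum_mul_right]
        refine tsum_congr fun n => ?_
        rw [hfn_def]
        simp only []
        rw [hkey n x]; ring
      calc Real.exp (γ * t) * (f₀ x + ∑' n, a n * ∫ y, iterConv K n (x - y) * f₀ y)
            * Real.exp (r * x)
          = Real.exp (γ * t) * (f₀ x * Real.exp (r * x)
            + (∑' n, a n * ∫ y, iterConv K n (x - y) * f₀ y) * Real.exp (r * x)) := by ring
        _ = Real.exp (γ * t) * (h x + ∑' n, fn n x) := by rw [this]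
    -- summability of the integrals
    have hsumF : Summable fun n => ∫ x, F n x := by
      rw [← summable_nat_add_iff 1]
      refine Summable.of_norm ?_
      refine hsum_norm.of_nonneg_of_le (fun n => norm_nonneg _) (fun n => ?_)
      exact norm_integral_le_integral_norm _
    -- put it together
    calc (∫ x, solFun K γ f₀ t x * Real.exp (r * x))
        = ∫ x, Real.exp (γ * t) * ∑' n, F n x := integral_congr_ae hptwise
      _ = Real.exp (γ * t) * ∫ x, ∑' n, F n x := integral_const_mul _ _
      _ = Real.exp (γ * t) * ∑' n, ∫ x, F n x := by
          rw [integral_tsum hFm hFlint_ne_top]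
      _ = Real.exp (γ * t) * (H + ∑' n, ∫ x, fn n x) := by
          rw [Summable.tsum_eq_zero_add hsumF]
          rfl
      _ = Real.exp ((γ + M) * t) * H := by
          have hval : ∀ n, (∫ x, fn n x) = (t * M) ^ (n + 1) / (Nat.factorial (n + 1) : ℝ) * H := by
            intro n
            rw [hfn_def]
            simp only []
            rw [integral_const_mul, hcval n, ha_def, mul_pow]
            ring
          simp_rw [hval]
          have hexp : Real.exp (t * M) = ∑' n : ℕ, (t * M) ^ n / (Nat.factorial n : ℝ) := by
            rw [Real.exp_eq_exp_ℝ, NormedSpace.exp_eq_tsum_div]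
          have hw : Summable fun n : ℕ => (t * M) ^ n / (Nat.factorial n : ℝ) :=
            Real.summable_pow_div_factorial _
          have hshift : (∑' n : ℕ, (t * M) ^ (n + 1) / (Nat.factorial (n + 1) : ℝ))
              = Real.exp (t * M) - 1 := by
            have := Summable.tsum_eq_zero_add hw
            rw [← hexp] at this
            simp only [pow_zero, Nat.factorial_zero, Nat.cast_one, div_one] at this
            linarith
          rw [tsum_mul_right, hshift]
          have he : (γ + M) * t = γ * t + t * M := by ring
          rw [he, Real.exp_add]
          ring
  refine ⟨part1, part2, fun h0 t ht => ?_⟩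
  rw [part2 t ht, h0]
  simp
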